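/- Let A be an n×n complex matrix that is unitarily similar to 0_k ⊕ Ã, where 1 ≤ k < n, 0_k is the k×k zero matrix, and Ã is an invertible (n−k)×(n−k) matrix with ‖I_{n−k} + Ã‖ < 1 (operator norm induced by the Euclidean norm). Then there exists t* > 1 such that ‖I_{n−k} + t*Ã‖ = 1, the function t ↦ ‖I + tA‖ is identically equal to 1 on the interval [1, t*], and t ↦ ‖I + tA‖ is strictly increasing on [t*, ∞). -/

import Mathlib

open Matrix

/-- The operator norm of a complex square matrix induced by the Euclidean norm. -/
noncomputable def euclOpNorm {n : ℕ} (M : Matrix (Fin n) (Fin n) ℂ) : ℝ :=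
  ‖Matrix.toEuclideanCLM (𝕜 := ℂ) M‖

section Aux

open scoped Matrix.Norms.L2Operator

lemma euclAux_norm_sq {ι : Type*} [Fintype ι] (x : EuclideanSpace ℂ ι) :
    ‖x‖ ^ 2 = ∑ i, ‖x i‖ ^ 2 := by
  rw [EuclideanSpace.norm_eq, Real.sq_sqrt]; positivity

lemma euclAux_norm_sq_split {k m : ℕ} (x : EuclideanSpace ℂ (Fin k ⊕ Fin m)) :
    ‖x‖ ^ 2 = ‖(EuclideanSpace.equiv (Fin k) ℂ).symm (fun i => x (Sum.inl i))‖ ^ 2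
      + ‖(EuclideanSpace.equiv (Fin m) ℂ).symm (fun i => x (Sum.inr i))‖ ^ 2 := by
  rw [euclAux_norm_sq, euclAux_norm_sq, euclAux_norm_sq, Fintype.sum_sum_type]
  rfl

lemma euclAux_opNorm_fromBlocks_diag {k m : ℕ}
    (B : Matrix (Fin k) (Fin k) ℂ) (C : Matrix (Fin m) (Fin m) ℂ) :
    ‖fromBlocks B 0 0 C‖ = max ‖B‖ ‖C‖ := by
  have key : ∀ x : EuclideanSpace ℂ (Fin k ⊕ Fin m),
      ‖toEuclideanCLM (𝕜 := ℂ) (fromBlocks B 0 0 C) x‖ ^ 2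
        = ‖toEuclideanCLM (𝕜 := ℂ) B ((EuclideanSpace.equiv _ ℂ).symm (fun i => x (Sum.inl i)))‖ ^ 2
          + ‖toEuclideanCLM (𝕜 := ℂ) C ((EuclideanSpace.equiv _ ℂ).symm (fun i => x (Sum.inr i)))‖ ^ 2 := by
    intro x
    rw [euclAux_norm_sq, euclAux_norm_sq, euclAux_norm_sq, Fintype.sum_sum_type]
    congr 1
    · refine Finset.sum_congr rfl fun i _ => ?_
      congr 1
      show ‖(fromBlocks B 0 0 C *ᵥ (x : Fin k ⊕ Fin m → ℂ)) (Sum.inl i)‖ = _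
      simp [Matrix.mulVec, dotProduct, Fintype.sum_sum_type]
    · refine Finset.sum_congr rfl fun i _ => ?_
      congr 1
      show ‖(fromBlocks B 0 0 C *ᵥ (x : Fin k ⊕ Fin m → ℂ)) (Sum.inr i)‖ = _
      simp [Matrix.mulVec, dotProduct, Fintype.sum_sum_type]
  apply le_antisymm
  · rw [cstar_norm_def]
    refine ContinuousLinearMap.opNorm_le_bound _ (le_max_iff.mpr (Or.inl (norm_nonneg B))) fun x => ?_
    have h1 : ‖toEuclideanCLM (𝕜 := ℂ) (fromBlocks B 0 0 C) x‖ ^ 2 ≤ (max ‖B‖ ‖C‖ * ‖x‖) ^ 2 := by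
      rw [key x, mul_pow, euclAux_norm_sq_split x, mul_add]
      gcongr
      · calc ‖toEuclideanCLM (𝕜 := ℂ) B _‖ ^ 2 ≤ (‖B‖ * ‖_‖) ^ 2 := by
              gcongr; exact (toEuclideanCLM (𝕜 := ℂ) B).le_opNorm _
          _ = ‖B‖ ^ 2 * ‖(EuclideanSpace.equiv (Fin k) ℂ).symm (fun i => x (Sum.inl i))‖ ^ 2 := by ring
          _ ≤ _ := by gcongr; exact le_max_left _ _
      · calc ‖toEuclideanCLM (𝕜 := ℂ) C _‖ ^ 2 ≤ (‖C‖ * ‖_‖) ^ 2 := by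
              gcongr; exact (toEuclideanCLM (𝕜 := ℂ) C).le_opNorm _
          _ = ‖C‖ ^ 2 * ‖(EuclideanSpace.equiv (Fin m) ℂ).symm (fun i => x (Sum.inr i))‖ ^ 2 := by ring
          _ ≤ _ := by gcongr; exact le_max_right _ _
    have := Real.sqrt_le_sqrt h1
    rwa [Real.sqrt_sq (norm_nonneg _), Real.sqrt_sq (by positivity)] at this
  · refine max_le ?_ ?_
    · rw [cstar_norm_def (A := B), cstar_norm_def]
      refine ContinuousLinearMap.opNorm_le_bound _ (norm_nonneg _) fun y => ?_
      set X : EuclideanSpace ℂ (Fin k ⊕ Fin m) :=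
        (EuclideanSpace.equiv _ ℂ).symm (Sum.elim (y : Fin k → ℂ) 0) with hX
      have e1 : ((EuclideanSpace.equiv (Fin k) ℂ).symm (fun i => X (Sum.inl i))) = y := rfl
      have e2 : ((EuclideanSpace.equiv (Fin m) ℂ).symm (fun i => X (Sum.inr i)))
          = (0 : EuclideanSpace ℂ (Fin m)) := rfl
      have hx : ‖X‖ = ‖y‖ := by
        have := euclAux_norm_sq_split X
        rw [e1, e2, norm_zero] at this
        have h2 : ‖X‖ ^ 2 = ‖y‖ ^ 2 := by rw [this]; ring
        have h3 := Real.sqrt_le_sqrt h2.le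
        have h5 := Real.sqrt_le_sqrt h2.ge
        rw [Real.sqrt_sq (norm_nonneg _), Real.sqrt_sq (norm_nonneg _)] at h3 h5
        exact le_antisymm h3 h5
      have hkey := key X
      rw [e1, e2, map_zero, norm_zero] at hkey
      have h4 : ‖toEuclideanCLM (𝕜 := ℂ) B y‖ ^ 2
          ≤ (‖toEuclideanCLM (𝕜 := ℂ) (fromBlocks B 0 0 C)‖ * ‖y‖) ^ 2 := by
        rw [← hx, mul_pow]
        calc ‖toEuclideanCLM (𝕜 := ℂ) B y‖ ^ 2
            = ‖toEuclideanCLM (𝕜 := ℂ) (fromBlocks B 0 0 C) X‖ ^ 2 := by rw [hkey]; ring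
          _ ≤ _ := by
              rw [← mul_pow]; gcongr
              exact (toEuclideanCLM (𝕜 := ℂ) (fromBlocks B 0 0 C)).le_opNorm _
      have := Real.sqrt_le_sqrt h4
      rwa [Real.sqrt_sq (norm_nonneg _), Real.sqrt_sq (by positivity)] at this
    · rw [cstar_norm_def (A := C), cstar_norm_def]
      refine ContinuousLinearMap.opNorm_le_bound _ (norm_nonneg _) fun y => ?_
      set X : EuclideanSpace ℂ (Fin k ⊕ Fin m) :=
        (EuclideanSpace.equiv _ ℂ).symm (Sum.elim 0 (y : Fin m → ℂ)) with hX
      have e1 : ((EuclideanSpace.equiv (Fin k) ℂ).symm (fun i => X (Sum.inl i)))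
          = (0 : EuclideanSpace ℂ (Fin k)) := rfl
      have e2 : ((EuclideanSpace.equiv (Fin m) ℂ).symm (fun i => X (Sum.inr i))) = y := rfl
      have hx : ‖X‖ = ‖y‖ := by
        have := euclAux_norm_sq_split X
        rw [e1, e2, norm_zero] at this
        have h2 : ‖X‖ ^ 2 = ‖y‖ ^ 2 := by rw [this]; ring
        have h3 := Real.sqrt_le_sqrt h2.le
        have h5 := Real.sqrt_le_sqrt h2.ge
        rw [Real.sqrt_sq (norm_nonneg _), Real.sqrt_sq (norm_nonneg _)] at h3 h5
        exact le_antisymm h3 h5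
      have hkey := key X
      rw [e1, e2, map_zero, norm_zero] at hkey
      have h4 : ‖toEuclideanCLM (𝕜 := ℂ) C y‖ ^ 2
          ≤ (‖toEuclideanCLM (𝕜 := ℂ) (fromBlocks B 0 0 C)‖ * ‖y‖) ^ 2 := by
        rw [← hx, mul_pow]
        calc ‖toEuclideanCLM (𝕜 := ℂ) C y‖ ^ 2
            = ‖toEuclideanCLM (𝕜 := ℂ) (fromBlocks B 0 0 C) X‖ ^ 2 := by rw [hkey]; ring
          _ ≤ _ := by
              rw [← mul_pow]; gcongr
              exact (toEuclideanCLM (𝕜 := ℂ) (fromBlocks B 0 0 C)).le_opNorm _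
      have := Real.sqrt_le_sqrt h4
      rwa [Real.sqrt_sq (norm_nonneg _), Real.sqrt_sq (by positivity)] at this

/-- identity matrix has norm 1 -/
lemma euclAux_norm_one {ι : Type*} [Fintype ι] [DecidableEq ι] [Nonempty ι] :
    ‖(1 : Matrix ι ι ℂ)‖ = 1 := by
  rw [cstar_norm_def, _root_.map_one]
  exact ContinuousLinearMap.norm_id

/-- pointwise action of a reindexed matrix -/
lemma euclAux_toCLM_reindex {ι κ : Type*} [Fintype ι] [DecidableEq ι] [Fintype κ] [DecidableEq κ]
    (e : ι ≃ κ) (N : Matrix ι ι ℂ) (x : EuclideanSpace ℂ κ) :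
    toEuclideanCLM (𝕜 := ℂ) (reindex e e N) x
      = (LinearIsometryEquiv.piLpCongrLeft 2 ℂ ℂ e)
          (toEuclideanCLM (𝕜 := ℂ) N ((LinearIsometryEquiv.piLpCongrLeft 2 ℂ ℂ e).symm x)) := by
  ext i
  have hR : ((LinearIsometryEquiv.piLpCongrLeft 2 ℂ ℂ e)
      (toEuclideanCLM (𝕜 := ℂ) N ((LinearIsometryEquiv.piLpCongrLeft 2 ℂ ℂ e).symm x))) i
      = (toEuclideanCLM (𝕜 := ℂ) N ((LinearIsometryEquiv.piLpCongrLeft 2 ℂ ℂ e).symm x))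
          (e.symm i) := rfl
  rw [hR]
  show (reindex e e N *ᵥ (x : κ → ℂ)) i
      = (N *ᵥ (((LinearIsometryEquiv.piLpCongrLeft 2 ℂ ℂ e).symm x : ι → ℂ))) (e.symm i)
  have hy : ∀ j : ι, ((LinearIsometryEquiv.piLpCongrLeft 2 ℂ ℂ e).symm x : ι → ℂ) j
      = x (e j) := by
    intro j
    rw [LinearIsometryEquiv.piLpCongrLeft_symm]
    simp [LinearIsometryEquiv.piLpCongrLeft_apply, Equiv.piCongrLeft']
  simp only [Matrix.mulVec, dotProduct, reindex_apply, Matrix.submatrix_apply]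
  rw [← Equiv.sum_comp e (fun j => N (e.symm i) (e.symm j) * x j)]
  refine Finset.sum_congr rfl fun j _ => ?_
  rw [hy j, Equiv.symm_apply_apply]

/-- reindexing does not increase the L2 operator norm -/
lemma euclAux_norm_reindex_le {ι κ : Type*} [Fintype ι] [DecidableEq ι] [Fintype κ] [DecidableEq κ]
    (e : ι ≃ κ) (N : Matrix ι ι ℂ) :
    ‖(reindex e e N : Matrix κ κ ℂ)‖ ≤ ‖N‖ := by
  rw [cstar_norm_def, cstar_norm_def]
  refine ContinuousLinearMap.opNorm_le_bound _ (norm_nonneg _) fun x => ?_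
  rw [euclAux_toCLM_reindex e N x, LinearIsometryEquiv.norm_map]
  calc ‖toEuclideanCLM (𝕜 := ℂ) N ((LinearIsometryEquiv.piLpCongrLeft 2 ℂ ℂ e).symm x)‖
      ≤ ‖toEuclideanCLM (𝕜 := ℂ) N‖ * ‖(LinearIsometryEquiv.piLpCongrLeft 2 ℂ ℂ e).symm x‖ :=
        (toEuclideanCLM (𝕜 := ℂ) N).le_opNorm _
    _ = ‖toEuclideanCLM (𝕜 := ℂ) N‖ * ‖x‖ := by rw [LinearIsometryEquiv.norm_map]

/-- reindexing preserves the L2 operator norm -/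
lemma euclAux_norm_reindex {ι κ : Type*} [Fintype ι] [DecidableEq ι] [Fintype κ] [DecidableEq κ]
    (e : ι ≃ κ) (N : Matrix ι ι ℂ) :
    ‖(reindex e e N : Matrix κ κ ℂ)‖ = ‖N‖ := by
  refine le_antisymm (euclAux_norm_reindex_le e N) ?_
  have h := euclAux_norm_reindex_le e.symm (reindex e e N)
  simpa using h

/-- conjugation by a unitary preserves the norm -/
lemma euclAux_norm_unitary_conj {n : ℕ} (U M : Matrix (Fin n) (Fin n) ℂ)
    (hU : star U * U = 1) : ‖U * M * star U‖ = ‖M‖ := by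
  have hUmem : U ∈ unitary (Matrix (Fin n) (Fin n) ℂ) :=
    Unitary.mem_iff.mpr ⟨hU, mul_eq_one_comm.mp hU⟩
  rw [CStarRing.norm_mul_mem_unitary _ (Unitary.star_mem hUmem),
    CStarRing.norm_mem_unitary_mul _ hUmem]

end Aux

open scoped Matrix.Norms.L2Operator

/-- If `A` is unitarily similar to `0ₖ ⊕ Atil` with `1 ≤ k < n`, `Atil` invertible and
`‖I + Atil‖ < 1`, then there is `t* > 1` with `‖I + t* Atil‖ = 1` such that
`t ↦ ‖I + tA‖` is identically `1` on `[1, t*]` and strictly increasing on `[t*, ∞)`. -/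
theorem norm_one_add_smul_plateau {n k m : ℕ} (hkm : k + m = n) (hk : 1 ≤ k) (hm : 1 ≤ m)
    (A : Matrix (Fin n) (Fin n) ℂ) (U : Matrix (Fin n) (Fin n) ℂ) (hU : star U * U = 1)
    (Atil : Matrix (Fin m) (Fin m) ℂ) (hAtil : IsUnit Atil.det)
    (hnorm : euclOpNorm (1 + Atil) < 1)
    (hsim : A = U *
      (Matrix.reindex (finSumFinEquiv.trans (finCongr hkm))
        (finSumFinEquiv.trans (finCongr hkm))
        (Matrix.fromBlocks (0 : Matrix (Fin k) (Fin k) ℂ) 0 0 Atil)) * star U) :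
    ∃ tstar : ℝ, 1 < tstar ∧ euclOpNorm (1 + (tstar : ℂ) • Atil) = 1 ∧
      (∀ t : ℝ, t ∈ Set.Icc 1 tstar → euclOpNorm (1 + (t : ℂ) • A) = 1) ∧
      StrictMonoOn (fun t : ℝ => euclOpNorm (1 + (t : ℂ) • A)) (Set.Ici tstar) := by
  haveI : Nonempty (Fin k) := Fin.pos_iff_nonempty.mp hk
  haveI : Nonempty (Fin m) := Fin.pos_iff_nonempty.mp hm
  set e : (Fin k ⊕ Fin m) ≃ Fin n := finSumFinEquiv.trans (finCongr hkm) with he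
  -- the small function g
  set g : ℝ → ℝ := fun t => ‖(1 : Matrix (Fin m) (Fin m) ℂ) + (t : ℂ) • Atil‖ with hg
  have hg_eucl : ∀ t : ℝ, euclOpNorm (1 + (t : ℂ) • Atil) = g t := fun _ => rfl
  -- f t = max 1 (g t)
  have hf : ∀ t : ℝ, euclOpNorm (1 + (t : ℂ) • A) = max 1 (g t) := by
    intro t
    have hUU : U * star U = 1 := mul_eq_one_comm.mp hU
    have hblocks : (1 : Matrix (Fin k ⊕ Fin m) (Fin k ⊕ Fin m) ℂ)
        + (t : ℂ) • fromBlocks (0 : Matrix (Fin k) (Fin k) ℂ) 0 0 Atil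
        = fromBlocks 1 0 0 ((1 : Matrix (Fin m) (Fin m) ℂ) + (t : ℂ) • Atil) := by
      rw [← Matrix.fromBlocks_one, Matrix.fromBlocks_smul, Matrix.fromBlocks_add]
      congr 1 <;> simp
    have h1 : (1 : Matrix (Fin n) (Fin n) ℂ) + (t : ℂ) • A
        = U * (reindex e e (fromBlocks 1 0 0
            ((1 : Matrix (Fin m) (Fin m) ℂ) + (t : ℂ) • Atil))) * star U := by
      rw [hsim, ← hblocks]
      have hre : (reindex e e ((1 : Matrix (Fin k ⊕ Fin m) (Fin k ⊕ Fin m) ℂ)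
            + (t : ℂ) • fromBlocks (0 : Matrix (Fin k) (Fin k) ℂ) 0 0 Atil))
          = 1 + (t : ℂ) • (reindex e e (fromBlocks (0 : Matrix (Fin k) (Fin k) ℂ) 0 0 Atil)) := by
        simp [Matrix.reindex_apply, Matrix.submatrix_add, Matrix.submatrix_smul,
          Matrix.submatrix_one_equiv]
      rw [hre, Matrix.mul_add, Matrix.add_mul, mul_one, hUU, Matrix.mul_smul, Matrix.smul_mul]
    show ‖(1 : Matrix (Fin n) (Fin n) ℂ) + (t : ℂ) • A‖ = _
    rw [h1, euclAux_norm_unitary_conj _ _ hU, euclAux_norm_reindex,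
      euclAux_opNorm_fromBlocks_diag, euclAux_norm_one]
  -- convexity inequality for g
  have gcvx : ∀ a b s t : ℝ, 0 ≤ a → 0 ≤ b → a + b = 1 →
      g (a * s + b * t) ≤ a * g s + b * g t := by
    intro a b s t ha hb hab
    have hab' : (a : ℂ) + (b : ℂ) = 1 := by
      rw [← Complex.ofReal_add, hab, Complex.ofReal_one]
    have hco : ((a * s + b * t : ℝ) : ℂ) = (a : ℂ) * (s : ℂ) + (b : ℂ) * (t : ℂ) := by
      push_cast; ring
    have hM : (1 : Matrix (Fin m) (Fin m) ℂ) + ((a * s + b * t : ℝ) : ℂ) • Atil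
        = (a : ℂ) • ((1 : Matrix (Fin m) (Fin m) ℂ) + (s : ℂ) • Atil)
          + (b : ℂ) • ((1 : Matrix (Fin m) (Fin m) ℂ) + (t : ℂ) • Atil) := by
      rw [smul_add, smul_add, smul_smul, smul_smul, add_add_add_comm, ← add_smul, ← add_smul,
        hab', one_smul, hco]
    simp only [hg]
    rw [hM]
    calc ‖(a : ℂ) • ((1 : Matrix (Fin m) (Fin m) ℂ) + (s : ℂ) • Atil)
          + (b : ℂ) • ((1 : Matrix (Fin m) (Fin m) ℂ) + (t : ℂ) • Atil)‖
        ≤ ‖(a : ℂ) • ((1 : Matrix (Fin m) (Fin m) ℂ) + (s : ℂ) • Atil)‖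
          + ‖(b : ℂ) • ((1 : Matrix (Fin m) (Fin m) ℂ) + (t : ℂ) • Atil)‖ := norm_add_le _ _
      _ = a * ‖(1 : Matrix (Fin m) (Fin m) ℂ) + (s : ℂ) • Atil‖
          + b * ‖(1 : Matrix (Fin m) (Fin m) ℂ) + (t : ℂ) • Atil‖ := by
          rw [norm_smul, norm_smul, Complex.norm_real, Complex.norm_real, Real.norm_eq_abs,
            Real.norm_eq_abs, abs_of_nonneg ha, abs_of_nonneg hb]
  -- continuity of g
  have hgc : Continuous g := by
    have hrw : g = fun t : ℝ =>
        ‖(1 : EuclideanSpace ℂ (Fin m) →L[ℂ] EuclideanSpace ℂ (Fin m))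
          + (t : ℂ) • toEuclideanCLM (𝕜 := ℂ) Atil‖ := by
      funext t
      simp only [hg]
      rw [cstar_norm_def, map_add, _root_.map_one, _root_.map_smul]
    rw [hrw]
    exact (continuous_const.add ((Complex.continuous_ofReal).smul continuous_const)).norm
  -- g 1 < 1
  have hg1 : g 1 < 1 := by
    have h0 : euclOpNorm (1 + Atil) = g 1 := by
      show ‖(1 : Matrix (Fin m) (Fin m) ℂ) + Atil‖ = _
      simp [hg]
    rw [← h0]
    exact hnorm
  -- norm of Atil is positive
  have hA0 : Atil ≠ 0 := by
    intro h0
    rw [h0, Matrix.det_zero] at hAtil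
    simpa using hAtil
  have hApos : (0 : ℝ) < ‖Atil‖ := norm_pos_iff.mpr hA0
  -- growth of g
  have hgrow : ∀ t : ℝ, |t| * ‖Atil‖ ≤ g t + 1 := by
    intro t
    have h2 : ((1 : Matrix (Fin m) (Fin m) ℂ) + (t : ℂ) • Atil) - 1 = (t : ℂ) • Atil := by
      abel
    calc |t| * ‖Atil‖ = ‖(t : ℂ) • Atil‖ := by
          rw [norm_smul, Complex.norm_real, Real.norm_eq_abs]
      _ = ‖((1 : Matrix (Fin m) (Fin m) ℂ) + (t : ℂ) • Atil) - 1‖ := by rw [h2]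
      _ ≤ ‖(1 : Matrix (Fin m) (Fin m) ℂ) + (t : ℂ) • Atil‖
          + ‖(1 : Matrix (Fin m) (Fin m) ℂ)‖ := norm_sub_le _ _
      _ = g t + 1 := by rw [euclAux_norm_one]
  -- choose T with g T ≥ 1
  set T : ℝ := max 2 (2 / ‖Atil‖) with hT
  have hT2 : (2 : ℝ) ≤ T := le_max_left _ _
  have hT1 : (1 : ℝ) ≤ T := by linarith
  have hgT : (1 : ℝ) ≤ g T := by
    have h1 : 2 / ‖Atil‖ ≤ T := le_max_right _ _
    have h2 : 2 / ‖Atil‖ * ‖Atil‖ = 2 := by field_simp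
    have h3 : (2 : ℝ) ≤ T * ‖Atil‖ := by
      calc (2:ℝ) = 2 / ‖Atil‖ * ‖Atil‖ := h2.symm
        _ ≤ T * ‖Atil‖ := by gcongr
    have h4 := hgrow T
    rw [abs_of_nonneg (by linarith : (0:ℝ) ≤ T)] at h4
    linarith
  -- intermediate value theorem
  have hIVT : (1 : ℝ) ∈ Set.Icc (g 1) (g T) := ⟨hg1.le, hgT⟩
  obtain ⟨tstar, htmem, htval⟩ := intermediate_value_Icc hT1 hgc.continuousOn hIVT
  have htstar1 : 1 < tstar := by
    rcases lt_or_eq_of_le htmem.1 with h | h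
    · exact h
    · exfalso; rw [← h] at htval; linarith
  refine ⟨tstar, htstar1, by rw [hg_eucl, htval], ?_, ?_⟩
  · -- plateau on [1, tstar]
    intro t ht
    obtain ⟨ht1, ht2⟩ := ht
    have hden : (0 : ℝ) < tstar - 1 := by linarith
    set a : ℝ := (tstar - t) / (tstar - 1) with ha
    set b : ℝ := (t - 1) / (tstar - 1) with hb
    have ha0 : 0 ≤ a := div_nonneg (by linarith) hden.le
    have hb0 : 0 ≤ b := div_nonneg (by linarith) hden.le
    have hab : a + b = 1 := by rw [ha, hb]; field_simp; ring
    have hcomb : a * 1 + b * tstar = t := by rw [ha, hb]; field_simp; try ring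
    have hgt : g t ≤ 1 := by
      have h5 := gcvx a b 1 tstar ha0 hb0 hab
      rw [hcomb, htval] at h5
      calc g t ≤ a * g 1 + b * 1 := h5
        _ ≤ a * 1 + b * 1 := by gcongr
        _ = 1 := by rw [mul_one, mul_one, hab]
    rw [hf t]
    exact max_eq_left hgt
  · -- strict monotonicity on [tstar, ∞)
    have hge : ∀ u : ℝ, tstar < u → 1 < g u := by
      intro u hu
      have hden : (0 : ℝ) < u - 1 := by linarith
      set a : ℝ := (u - tstar) / (u - 1) with ha
      set b : ℝ := (tstar - 1) / (u - 1) with hb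
      have ha0 : 0 < a := div_pos (by linarith) hden
      have hb0 : 0 < b := div_pos (by linarith) hden
      have hab : a + b = 1 := by rw [ha, hb]; field_simp; ring
      have hcomb : a * 1 + b * u = tstar := by rw [ha, hb]; field_simp; try ring
      have h1 := gcvx a b 1 u ha0.le hb0.le hab
      rw [hcomb, htval] at h1
      by_contra hcon
      push_neg at hcon
      have h5 : a * g 1 < a * 1 := by nlinarith
      have h6 : b * g u ≤ b * 1 := by nlinarith
      have h7 : a * g 1 + b * g u < a + b := by
        rw [mul_one] at h5 h6; linarith
      rw [hab] at h7
      linarith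
    have hge' : ∀ u : ℝ, tstar ≤ u → 1 ≤ g u := by
      intro u hu
      rcases eq_or_lt_of_le hu with h | h
      · rw [← h, htval]
      · exact (hge u h).le
    intro s hs t ht hst
    simp only [Set.mem_Ici] at hs ht
    have hs1 : (1 : ℝ) < s := lt_of_lt_of_le htstar1 hs
    have ht1 : (1 : ℝ) < t := by linarith
    have hden : (0 : ℝ) < t - 1 := by linarith
    set a : ℝ := (t - s) / (t - 1) with ha
    set b : ℝ := (s - 1) / (t - 1) with hb
    have ha0 : 0 < a := div_pos (by linarith) hden
    have hb0 : 0 ≤ b := div_nonneg (by linarith) hden.le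
    have hab : a + b = 1 := by rw [ha, hb]; field_simp; ring
    have hcomb : a * 1 + b * t = s := by rw [ha, hb]; field_simp; try ring
    have hgt1 : 1 < g t := hge t (lt_of_le_of_lt hs hst)
    have hkey : g s < g t := by
      have h1 := gcvx a b 1 t ha0.le hb0 hab
      rw [hcomb] at h1
      calc g s ≤ a * g 1 + b * g t := h1
        _ < a * 1 + b * g t := by gcongr
        _ ≤ a * g t + b * g t := by linarith [mul_le_mul_of_nonneg_left hgt1.le ha0.le]
        _ = g t := by rw [← add_mul, hab, one_mul]
    have hfs : euclOpNorm (1 + (s : ℂ) • A) = g s := by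
      rw [hf s]; exact max_eq_right (hge' s hs)
    have hft : euclOpNorm (1 + (t : ℂ) • A) = g t := by
      rw [hf t]; exact max_eq_right (hge' t ht)
    show euclOpNorm (1 + (s : ℂ) • A) < euclOpNorm (1 + (t : ℂ) • A)
    rw [hfs, hft]
    exact hkey
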